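/- Let S and S₀ be metric spaces with their Borel σ-algebras, μ an inner regular (with respect to compact sets) Borel probability measure on S, μ₀ a Borel measure on S₀, and h : S → S₀ a Borel-measurable map with μ₀ = μ ∘ h⁻¹ (i.e., h is measure-preserving). Then for every Borel set A ⊆ S there exists a Borel set D ⊆ S₀ with D ⊆ h(A) and μ₀(D) ≥ μ(A). -/

import Mathlib

open MeasureTheory
open Set Topology

lemma aux_compact {S : Type*} [MetricSpace S] [MeasurableSpace S] [BorelSpace S]
    (μ : Measure S) [IsFiniteMeasure μ]
    (hreg : μ.InnerRegularWRT IsCompact MeasurableSet)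
    {B : Set S} (hB : MeasurableSet B) {ε : ENNReal} (hε : ε ≠ 0) :
    ∃ K, K ⊆ B ∧ IsCompact K ∧ μ B ≤ μ K + ε := by
  rcases eq_or_ne (μ B) 0 with h0 | h0
  · exact ⟨∅, empty_subset _, isCompact_empty, by simp [h0]⟩
  · have hlt : μ B - ε < μ B := ENNReal.sub_lt_self (measure_ne_top μ B) h0 hε
    obtain ⟨K, hKB, hKc, hK⟩ := hreg hB _ hlt
    exact ⟨K, hKB, hKc, tsub_le_iff_right.mp hK.le⟩

lemma aux_lusin {S S₀ : Type*} [MetricSpace S]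
    [MetricSpace S₀] [TopologicalSpace.SeparableSpace S₀]
    [MeasurableSpace S] [BorelSpace S] [MeasurableSpace S₀] [BorelSpace S₀]
    (μ : Measure S) [IsFiniteMeasure μ]
    (hreg : μ.InnerRegularWRT IsCompact MeasurableSet)
    (h : S → S₀) (hm : Measurable h)
    {A : Set S} (hA : MeasurableSet A) {ε : ENNReal} (hε : ε ≠ 0) :
    ∃ K, K ⊆ A ∧ IsCompact K ∧ ContinuousOn h K ∧ μ A ≤ μ K + ε := by
  haveI : SecondCountableTopology S₀ := UniformSpace.secondCountable_of_separable S₀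
  obtain ⟨𝒱, h𝒱c, -, hbasis⟩ := TopologicalSpace.exists_countable_basis S₀
  -- enumerate the basis (with ∅ added to ensure nonemptiness)
  obtain ⟨b, hb⟩ : ∃ b : ℕ → Set S₀, insert ∅ 𝒱 = range b :=
    ((h𝒱c.insert ∅).exists_eq_range (insert_nonempty _ _))
  have hbmem : ∀ n, b n = ∅ ∨ b n ∈ 𝒱 := by
    intro n
    have : b n ∈ insert ∅ 𝒱 := hb ▸ mem_range_self n
    simpa using this
  have hbopen : ∀ n, IsOpen (b n) := by
    intro n
    rcases hbmem n with h1 | h1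
    · simp [h1]
    · exact hbasis.isOpen h1
  have hbmeas : ∀ n, MeasurableSet (A ∩ h ⁻¹' (b n)) := fun n =>
    hA.inter (hm (hbopen n).measurableSet)
  have hbmeas' : ∀ n, MeasurableSet (A \ h ⁻¹' (b n)) := fun n =>
    hA.diff (hm (hbopen n).measurableSet)
  have hεn : ∀ n : ℕ, ε * 2⁻¹ ^ (n + 2) ≠ 0 := by
    intro n
    simp [hε, ENNReal.pow_ne_zero]
  choose K1 hK1sub hK1c hK1 using fun n => aux_compact μ hreg (hbmeas n) (hεn n)
  choose K2 hK2sub hK2c hK2 using fun n => aux_compact μ hreg (hbmeas' n) (hεn n)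
  set K : Set S := ⋂ n, (K1 n ∪ K2 n) with hK
  have hKA : K ⊆ A := by
    refine (iInter_subset _ 0).trans ?_
    exact union_subset ((hK1sub 0).trans inter_subset_left) ((hK2sub 0).trans diff_subset)
  have hKcl : IsClosed K :=
    isClosed_iInter fun n => ((hK1c n).union (hK2c n)).isClosed
  have hKc : IsCompact K :=
    ((hK1c 0).union (hK2c 0)).of_isClosed_subset hKcl (iInter_subset _ 0)
  have hdK : ∀ {B C : Set S} {δ : ENNReal}, C ⊆ B → IsCompact C → μ B ≤ μ C + δ →
      μ (B \ C) ≤ δ := by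
    intro B C δ hsub hc hle
    rw [measure_diff hsub hc.isClosed.measurableSet.nullMeasurableSet (measure_ne_top μ _)]
    exact tsub_le_iff_left.mpr hle
  -- measure bound
  have hdiff : ∀ n, μ (A \ (K1 n ∪ K2 n)) ≤ 2 * (ε * 2⁻¹ ^ (n + 2)) := by
    intro n
    have hsplit : A \ (K1 n ∪ K2 n) ⊆
        ((A ∩ h ⁻¹' (b n)) \ K1 n) ∪ ((A \ h ⁻¹' (b n)) \ K2 n) := by
      intro x hx
      by_cases hxb : h x ∈ b n
      · exact Or.inl ⟨⟨hx.1, hxb⟩, fun hc => hx.2 (Or.inl hc)⟩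
      · exact Or.inr ⟨⟨hx.1, hxb⟩, fun hc => hx.2 (Or.inr hc)⟩
    calc μ (A \ (K1 n ∪ K2 n)) ≤ μ (((A ∩ h ⁻¹' (b n)) \ K1 n) ∪ ((A \ h ⁻¹' (b n)) \ K2 n)) :=
          measure_mono hsplit
      _ ≤ μ ((A ∩ h ⁻¹' (b n)) \ K1 n) + μ ((A \ h ⁻¹' (b n)) \ K2 n) := measure_union_le _ _
      _ ≤ (ε * 2⁻¹ ^ (n + 2)) + (ε * 2⁻¹ ^ (n + 2)) := by
          gcongr
          · exact hdK (hK1sub n) (hK1c n) (hK1 n)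
          · exact hdK (hK2sub n) (hK2c n) (hK2 n)
      _ = 2 * (ε * 2⁻¹ ^ (n + 2)) := by ring
  have hAK : μ (A \ K) ≤ ε := by
    have : A \ K ⊆ ⋃ n, A \ (K1 n ∪ K2 n) := by
      intro x hx
      have hx2 := hx.2
      simp only [hK, mem_iInter, not_forall, mem_union, not_or] at hx2
      obtain ⟨n, hn⟩ := hx2
      exact mem_iUnion.mpr ⟨n, hx.1, fun hc => hc.elim hn.1 hn.2⟩
    calc μ (A \ K) ≤ ∑' n, μ (A \ (K1 n ∪ K2 n)) :=
          (measure_mono this).trans (measure_iUnion_le _)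
      _ ≤ ∑' n : ℕ, 2 * (ε * 2⁻¹ ^ (n + 2)) := ENNReal.tsum_le_tsum hdiff
      _ = ε := by
          have : ∀ n : ℕ, 2 * (ε * 2⁻¹ ^ (n + 2)) = ε * 2⁻¹ * 2⁻¹ ^ n := by
            intro n
            rw [pow_add]
            rw [show ((2 : ENNReal)⁻¹ ^ 2 = 2⁻¹ * 2⁻¹) by ring]
            rw [show (2 : ENNReal) * (ε * (2⁻¹ ^ n * (2⁻¹ * 2⁻¹))) =
              (2 * 2⁻¹) * (ε * 2⁻¹ * 2⁻¹ ^ n) by ring]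
            rw [ENNReal.mul_inv_cancel (by norm_num) (by norm_num), one_mul]
          simp_rw [this]
          rw [ENNReal.tsum_mul_left, ENNReal.tsum_geometric]
          rw [show ((1 : ENNReal) - 2⁻¹) = 2⁻¹ by
            rw [ENNReal.sub_eq_of_eq_add (by norm_num)]
            rw [ENNReal.inv_two_add_inv_two]]
          rw [mul_assoc, inv_inv,
            ENNReal.inv_mul_cancel (by norm_num) (by norm_num), mul_one]
  have hcont : ContinuousOn h K := by
    intro x hx
    rw [ContinuousWithinAt, hbasis.nhds_hasBasis.tendsto_right_iff]
    rintro V ⟨hV𝒱, hhxV⟩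
    obtain ⟨n, hn⟩ : ∃ n, b n = V := by
      have : V ∈ range b := hb ▸ mem_insert_of_mem _ hV𝒱
      exact this.imp fun n hn => hn
    have hxK12 : x ∈ K1 n ∪ K2 n := mem_iInter.mp hx n
    have hxnotK2 : x ∉ K2 n := fun hc => ((hK2sub n hc).2 : h x ∉ b n) (hn ▸ hhxV)
    have hopen : IsOpen (K2 n)ᶜ := (hK2c n).isClosed.isOpen_compl
    refine Filter.eventually_iff_exists_mem.mpr ⟨(K2 n)ᶜ ∩ K, ?_, ?_⟩
    · exact Filter.inter_mem (mem_nhdsWithin_of_mem_nhds (hopen.mem_nhds hxnotK2))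
        self_mem_nhdsWithin
    · rintro y ⟨hy2, hyK⟩
      have : y ∈ K1 n := (mem_iInter.mp hyK n).resolve_right hy2
      exact hn ▸ (hK1sub n this).2
  refine ⟨K, hKA, hKc, hcont, ?_⟩
  calc μ A ≤ μ (K ∪ (A \ K)) := measure_mono fun x hx => by
        by_cases hxK : x ∈ K
        · exact Or.inl hxK
        · exact Or.inr ⟨hx, hxK⟩
    _ ≤ μ K + μ (A \ K) := measure_union_le _ _
    _ ≤ μ K + ε := by gcongr

/-- Lemma 2 of the paper: if `h : S → S₀` is a Borel measure-preserving map between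
metric spaces, `μ` an inner regular (w.r.t. compact sets) Borel probability measure
on `S`, then for every Borel `A ⊆ S` there is a Borel `D ⊆ h '' A` with `μ₀ D ≥ μ A`. -/
theorem exists_borel_subset_image_of_measurePreserving
    {S S₀ : Type*} [MetricSpace S] [TopologicalSpace.SeparableSpace S]
    [MetricSpace S₀] [TopologicalSpace.SeparableSpace S₀]
    [MeasurableSpace S] [BorelSpace S] [MeasurableSpace S₀] [BorelSpace S₀]
    (μ : Measure S) [IsProbabilityMeasure μ]
    (hreg : μ.InnerRegularWRT IsCompact MeasurableSet)
    (μ₀ : Measure S₀)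
    (h : S → S₀) (hm : Measurable h)
    (hpres : ∀ B : Set S₀, MeasurableSet B → μ₀ B = μ (h ⁻¹' B)) :
    ∀ A : Set S, MeasurableSet A →
      ∃ D : Set S₀, MeasurableSet D ∧ D ⊆ h '' A ∧ μ A ≤ μ₀ D := by
  intro A hA
  have hεj : ∀ j : ℕ, ((j : ENNReal)⁻¹ : ENNReal) ≠ 0 := fun j =>
    ENNReal.inv_ne_zero.mpr (ENNReal.natCast_ne_top j)
  choose K hKA hKc hKcont hKμ using fun j : ℕ =>
    aux_lusin μ hreg h hm hA (hεj j)
  have himgc : ∀ j, IsCompact (h '' K j) := fun j =>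
    (hKc j).image_of_continuousOn (hKcont j)
  refine ⟨⋃ j, h '' K j, MeasurableSet.iUnion fun j => (himgc j).isClosed.measurableSet,
    iUnion_subset fun j => image_mono (hKA j), ?_⟩
  have key : ∀ j : ℕ, μ A ≤ μ₀ (⋃ j, h '' K j) + (j : ENNReal)⁻¹ := by
    intro j
    have h1 : μ (K j) ≤ μ₀ (⋃ j, h '' K j) := by
      have h2 : μ₀ (h '' K j) = μ (h ⁻¹' (h '' K j)) :=
        hpres _ (himgc j).isClosed.measurableSet
      calc μ (K j) ≤ μ (h ⁻¹' (h '' K j)) := measure_mono (subset_preimage_image h _)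
        _ = μ₀ (h '' K j) := h2.symm
        _ ≤ μ₀ (⋃ j, h '' K j) := measure_mono (subset_iUnion (fun i => h '' K i) j)
    calc μ A ≤ μ (K j) + (j : ENNReal)⁻¹ := hKμ j
      _ ≤ μ₀ (⋃ j, h '' K j) + (j : ENNReal)⁻¹ := by gcongr
  have hlim : Filter.Tendsto (fun j : ℕ => μ₀ (⋃ j, h '' K j) + (j : ENNReal)⁻¹)
      Filter.atTop (𝓝 (μ₀ (⋃ j, h '' K j))) := by
    have := Filter.Tendsto.const_add (μ₀ (⋃ j, h '' K j))
      ENNReal.tendsto_inv_nat_nhds_zero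
    simpa using this
  exact ge_of_tendsto hlim (Filter.Eventually.of_forall key)
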